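/- Chen's identity for iterated integrals: let x : [0,T] → ℝ^d be continuous of bounded variation and s ≤ u ≤ t. Then for every k ≥ 1, X^k_{s,t} = ∑_{j=0}^{k} X^j_{s,u} ⊗ X^{k−j}_{u,t}, where X^0 := 1 ∈ ℝ and X^k_{s,t} := ∫_{s<u_1<⋯<u_k<t} dx_{u_1} ⊗ ⋯ ⊗ dx_{u_k} ∈ (ℝ^d)^{⊗k}. -/

import Mathlib

open scoped BigOperators

/-- Left-point Riemann–Stieltjes sum of `f` against the scalar integrator `g`
along the partition `τ 0 ≤ τ 1 ≤ ⋯ ≤ τ n`. -/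
def RSSum {E : Type*} [AddCommGroup E] [Module ℝ E]
    (f : ℝ → E) (g : ℝ → ℝ) (n : ℕ) (τ : ℕ → ℝ) : E :=
  ∑ i ∈ Finset.range n, (g (τ (i + 1)) - g (τ i)) • f (τ i)

/-- `IsRS f g s t I` : the Riemann–Stieltjes integral ∫_s^t f dg exists and equals `I`,
in the sense of convergence of left-point Riemann–Stieltjes sums as the mesh of the
partition of [s,t] tends to 0. -/
def IsRS {E : Type*} [NormedAddCommGroup E] [Module ℝ E]
    (f : ℝ → E) (g : ℝ → ℝ) (s t : ℝ) (I : E) : Prop :=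
  ∀ ε > (0 : ℝ), ∃ δ > (0 : ℝ), ∀ (n : ℕ) (τ : ℕ → ℝ),
    0 < n → τ 0 = s → τ n = t → (∀ i < n, τ i ≤ τ (i + 1)) →
    (∀ i < n, τ (i + 1) - τ i < δ) → ‖RSSum f g n τ - I‖ < ε

/-- `IsSimplexIntegral d x s h w J` : `J t` is the iterated (simplex) integral
∫_{s<u_1<⋯<u_k<t} h(u_1) dx^{w_1}_{u_1} ⋯ dx^{w_k}_{u_k} for the word
`w = [w_1, …, w_k]`, defined recursively in the outermost integration variable:
the integral for the word `w ++ [a]` over [s,t] is the Riemann–Stieltjes integral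
∫_s^t (integral for `w` over [s,u]) dx^a_u. -/
inductive IsSimplexIntegral (d : ℕ) (x : Fin d → ℝ → ℝ) (s : ℝ) (h : ℝ → ℝ) :
    List (Fin d) → (ℝ → ℝ) → Prop
  | nil : IsSimplexIntegral d x s h [] h
  | step (w : List (Fin d)) (J : ℝ → ℝ) (a : Fin d) (J' : ℝ → ℝ) :
      IsSimplexIntegral d x s h w J →
      (∀ t, s ≤ t → IsRS J (x a) s t (J' t)) →
      IsSimplexIntegral d x s h (w ++ [a]) J'

lemma partition_mono {n : ℕ} {τ : ℕ → ℝ} (hmono : ∀ i < n, τ i ≤ τ (i+1)) :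
    ∀ i j, i ≤ j → j ≤ n → τ i ≤ τ j := by
  intro i j hij hjn
  induction j with
  | zero => simp_all
  | succ m ih =>
    rcases Nat.lt_or_ge i (m+1) with h | h
    · exact le_trans (ih (Nat.lt_succ_iff.mp h) (le_trans (Nat.le_succ m) hjn))
        (hmono m (by omega))
    · have : i = m+1 := le_antisymm hij h
      simp [this]

lemma isRS_congr_on {f f' g : ℝ → ℝ} {s t I : ℝ}
    (hff' : ∀ r, s ≤ r → r ≤ t → f r = f' r) (h : IsRS f g s t I) : IsRS f' g s t I := by
  intro ε hε
  obtain ⟨δ, hδ, H⟩ := h ε hε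
  refine ⟨δ, hδ, fun n τ hn h0 hn' hmono hmesh => ?_⟩
  have hsum : RSSum f' g n τ = RSSum f g n τ := by
    unfold RSSum
    refine Finset.sum_congr rfl fun i hi => ?_
    rw [Finset.mem_range] at hi
    rw [hff' (τ i) (h0 ▸ partition_mono hmono 0 i (Nat.zero_le _) (le_of_lt (by omega)))
      (hn' ▸ partition_mono hmono i n (le_of_lt (by omega)) le_rfl)]
  rw [hsum]
  exact H n τ hn h0 hn' hmono hmesh

lemma isRS_zero {g : ℝ → ℝ} {s t : ℝ} : IsRS (fun _ => (0:ℝ)) g s t 0 := by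
  intro ε hε
  exact ⟨1, one_pos, fun n τ _ _ _ _ _ => by simp [RSSum, hε]⟩

lemma IsRS.add {f f' g : ℝ → ℝ} {s t I I' : ℝ} (h : IsRS f g s t I) (h' : IsRS f' g s t I') :
    IsRS (fun r => f r + f' r) g s t (I + I') := by
  intro ε hε
  obtain ⟨δ1, hδ1, H1⟩ := h (ε/2) (by linarith)
  obtain ⟨δ2, hδ2, H2⟩ := h' (ε/2) (by linarith)
  refine ⟨min δ1 δ2, lt_min hδ1 hδ2, fun n τ hn h0 hn' hmono hmesh => ?_⟩
  have hs : RSSum (fun r => f r + f' r) g n τ = RSSum f g n τ + RSSum f' g n τ := by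
    simp only [RSSum, smul_eq_mul, ← Finset.sum_add_distrib]
    exact Finset.sum_congr rfl fun i _ => by ring
  have e1 := H1 n τ hn h0 hn' hmono (fun i hi => lt_of_lt_of_le (hmesh i hi) (min_le_left _ _))
  have e2 := H2 n τ hn h0 hn' hmono (fun i hi => lt_of_lt_of_le (hmesh i hi) (min_le_right _ _))
  have : RSSum (fun r => f r + f' r) g n τ - (I + I') =
      (RSSum f g n τ - I) + (RSSum f' g n τ - I') := by rw [hs]; ring
  rw [this]
  calc ‖(RSSum f g n τ - I) + (RSSum f' g n τ - I')‖
      ≤ ‖RSSum f g n τ - I‖ + ‖RSSum f' g n τ - I'‖ := norm_add_le _ _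
    _ < ε/2 + ε/2 := by exact add_lt_add e1 e2
    _ = ε := by ring

lemma IsRS.const_mul {f g : ℝ → ℝ} {s t I : ℝ} (c : ℝ) (h : IsRS f g s t I) :
    IsRS (fun r => c * f r) g s t (c * I) := by
  intro ε hε
  obtain ⟨δ, hδ, H⟩ := h (ε/(|c|+1)) (by positivity)
  refine ⟨δ, hδ, fun n τ hn h0 hn' hmono hmesh => ?_⟩
  have hs : RSSum (fun r => c * f r) g n τ = c * RSSum f g n τ := by
    simp only [RSSum, smul_eq_mul, Finset.mul_sum]
    exact Finset.sum_congr rfl fun i _ => by ring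
  have e := H n τ hn h0 hn' hmono hmesh
  have : RSSum (fun r => c * f r) g n τ - c * I = c * (RSSum f g n τ - I) := by rw [hs]; ring
  rw [this]
  rw [Real.norm_eq_abs, abs_mul]
  calc |c| * |RSSum f g n τ - I| ≤ |c| * (ε/(|c|+1)) := by
        apply mul_le_mul_of_nonneg_left _ (abs_nonneg c)
        rw [Real.norm_eq_abs] at e; linarith
    _ < ε := by
        rw [div_eq_inv_mul, ← mul_assoc]
        have h1 : |c| * (|c|+1)⁻¹ < 1 := by
          rw [mul_inv_lt_iff₀ (by positivity)]
          linarith [abs_nonneg c]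
        nlinarith

lemma exists_fine_partition {s t : ℝ} (hst : s ≤ t) {δ : ℝ} (hδ : 0 < δ) :
    ∃ (n : ℕ) (τ : ℕ → ℝ), 0 < n ∧ τ 0 = s ∧ τ n = t ∧ (∀ i < n, τ i ≤ τ (i+1)) ∧
      (∀ i < n, τ (i+1) - τ i < δ) := by
  obtain ⟨n, hn⟩ := exists_nat_gt (max 1 ((t - s)/δ))
  have hn1 : (1:ℝ) < n := lt_of_le_of_lt (le_max_left _ _) hn
  have hn0 : (0:ℝ) < n := by linarith
  have hq0 : (0:ℝ) ≤ (t - s)/n := div_nonneg (by linarith) hn0.le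
  have hqδ : (t - s)/n < δ := by
    rw [div_lt_iff₀ hn0]
    have := lt_of_le_of_lt (le_max_right 1 ((t-s)/δ)) hn
    rw [div_lt_iff₀ hδ] at this
    linarith
  refine ⟨n, fun i => s + i * ((t - s)/n), by exact_mod_cast hn0, by simp, ?_, ?_, ?_⟩
  · field_simp
    ring
  · intro i _
    have : (i:ℝ) * ((t-s)/n) ≤ (i+1) * ((t-s)/n) := by nlinarith
    push_cast
    linarith
  · intro i _
    push_cast
    have : s + ((i:ℝ)+1) * ((t-s)/(n:ℝ)) - (s + (i:ℝ) * ((t-s)/(n:ℝ))) = (t-s)/(n:ℝ) := by ring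
    rw [this]
    exact hqδ
lemma isRS_unique {f g : ℝ → ℝ} {s t I I' : ℝ} (hst : s ≤ t)
    (h : IsRS f g s t I) (h' : IsRS f g s t I') : I = I' := by
  by_contra hne
  have hd : 0 < ‖I - I'‖/2 := by
    have : I - I' ≠ 0 := sub_ne_zero_of_ne hne
    have := norm_pos_iff.mpr this
    linarith
  obtain ⟨δ1, hδ1, H1⟩ := h (‖I - I'‖/2) hd
  obtain ⟨δ2, hδ2, H2⟩ := h' (‖I - I'‖/2) hd
  obtain ⟨n, τ, hn, h0, hn', hmono, hmesh⟩ := exists_fine_partition hst (lt_min hδ1 hδ2)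
  have e1 := H1 n τ hn h0 hn' hmono (fun i hi => lt_of_lt_of_le (hmesh i hi) (min_le_left _ _))
  have e2 := H2 n τ hn h0 hn' hmono (fun i hi => lt_of_lt_of_le (hmesh i hi) (min_le_right _ _))
  have : ‖I - I'‖ ≤ ‖RSSum f g n τ - I'‖ + ‖RSSum f g n τ - I‖ := by
    have heq : I - I' = (RSSum f g n τ - I') - (RSSum f g n τ - I) := by ring
    rw [heq]
    exact norm_sub_le _ _
  linarith

lemma isRS_abs_le {f g : ℝ → ℝ} {s t I M V : ℝ} (hst : s ≤ t)
    (h : IsRS f g s t I) (hM : ∀ r, s ≤ r → r ≤ t → |f r| ≤ M) (hM0 : 0 ≤ M)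
    (hV : ∀ (n : ℕ) (τ : ℕ → ℝ), 0 < n → τ 0 = s → τ n = t → (∀ i < n, τ i ≤ τ (i+1)) →
      ∑ i ∈ Finset.range n, |g (τ (i+1)) - g (τ i)| ≤ V) :
    |I| ≤ M * V := by
  by_contra hc
  push_neg at hc
  obtain ⟨δ, hδ, H⟩ := h (|I| - M*V) (by linarith)
  obtain ⟨n, τ, hn, h0, hn', hmono, hmesh⟩ := exists_fine_partition hst hδ
  have h1 := H n τ hn h0 hn' hmono hmesh
  have h2 : |RSSum f g n τ| ≤ M * V := by
    calc |RSSum f g n τ| ≤ ∑ i ∈ Finset.range n, |g (τ (i+1)) - g (τ i)| * |f (τ i)| := by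
          refine (Finset.abs_sum_le_sum_abs _ _).trans (le_of_eq ?_)
          exact Finset.sum_congr rfl fun i _ => by rw [smul_eq_mul, abs_mul]
      _ ≤ ∑ i ∈ Finset.range n, |g (τ (i+1)) - g (τ i)| * M := by
          refine Finset.sum_le_sum fun i hi => ?_
          rw [Finset.mem_range] at hi
          exact mul_le_mul_of_nonneg_left
            (hM _ (h0 ▸ partition_mono hmono 0 i (Nat.zero_le _) (by omega))
              (hn' ▸ partition_mono hmono i n (by omega) le_rfl)) (abs_nonneg _)
      _ = M * ∑ i ∈ Finset.range n, |g (τ (i+1)) - g (τ i)| := by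
          rw [← Finset.sum_mul]; ring
      _ ≤ M * V := mul_le_mul_of_nonneg_left (hV n τ hn h0 hn' hmono) hM0
  rw [Real.norm_eq_abs] at h1
  have h3 : |I| - |RSSum f g n τ| ≤ |RSSum f g n τ - I| := by
    have := abs_sub_abs_le_abs_sub I (RSSum f g n τ)
    rw [abs_sub_comm I (RSSum f g n τ)] at this
    linarith
  linarith

lemma isRS_sum {ι : Type*} (F : Finset ι) (c : ι → ℝ) (f : ι → ℝ → ℝ) (g : ℝ → ℝ)
    (s t : ℝ) (I : ι → ℝ) (h : ∀ j ∈ F, IsRS (f j) g s t (I j)) :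
    IsRS (fun r => ∑ j ∈ F, c j * f j r) g s t (∑ j ∈ F, c j * I j) := by
  classical
  induction F using Finset.induction with
  | empty => simpa using isRS_zero
  | insert b F' hj ih =>
    simp only [Finset.sum_insert hj]
    exact ((h b (Finset.mem_insert_self b F')).const_mul (c b)).add
      (ih fun j hjF => h j (Finset.mem_insert_of_mem hjF))
lemma isRS_glue {f g : ℝ → ℝ} {s u t I1 I2 M : ℝ} (hsu : s ≤ u) (hut : u ≤ t)
    (hM0 : 0 < M) (hM : ∀ r, s ≤ r → r ≤ t → |f r| ≤ M)
    (hg : ∀ ε > (0:ℝ), ∃ δ > (0:ℝ), ∀ r, s ≤ r → r ≤ t → |r - u| < δ → |g r - g u| ≤ ε)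
    (h1 : IsRS f g s u I1) (h2 : IsRS f g u t I2) :
    IsRS f g s t (I1 + I2) := by
  classical
  intro ε hε
  obtain ⟨δ1, hδ1, H1⟩ := h1 (ε/3) (by linarith)
  obtain ⟨δ2, hδ2, H2⟩ := h2 (ε/3) (by linarith)
  obtain ⟨δ3, hδ3, H3⟩ := hg (ε/(3*(2*M+1))) (by positivity)
  refine ⟨min δ1 (min δ2 δ3), lt_min hδ1 (lt_min hδ2 hδ3), fun n τ hn h0 hn' hmono hmesh => ?_⟩
  set i := Nat.findGreatest (fun j => τ j ≤ u) (n-1) with hidef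
  have hP0 : τ 0 ≤ u := h0 ▸ hsu
  have hile : i ≤ n - 1 := Nat.findGreatest_le _
  have hin : i < n := by omega
  have hτi : τ i ≤ u := Nat.findGreatest_spec (P := fun j => τ j ≤ u) (Nat.zero_le _) hP0
  have hτi1 : u ≤ τ (i+1) := by
    rcases Nat.lt_or_ge (n-1) (i+1) with hc | hc
    · have : i + 1 = n := by omega
      rw [this, hn']; exact hut
    · by_contra hcon
      push_neg at hcon
      exact Nat.findGreatest_is_greatest (P := fun j => τ j ≤ u) (Nat.lt_succ_self i) hc hcon.le
  set τ1 : ℕ → ℝ := fun j => if j ≤ i then τ j else u with hτ1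
  set τ2 : ℕ → ℝ := fun j => if j = 0 then u else τ (i + j) with hτ2
  -- partition facts for τ1 on [s,u]
  have p1_0 : τ1 0 = s := by simp [hτ1, Nat.zero_le, h0]
  have p1_n : τ1 (i+1) = u := by simp [hτ1]
  have p1_mono : ∀ j < i+1, τ1 j ≤ τ1 (j+1) := by
    intro j hj
    rcases Nat.lt_or_ge j i with hji | hji
    · simp only [hτ1, if_pos hji.le, if_pos (Nat.succ_le_of_lt hji)]
      exact hmono j (by omega)
    · have hji' : j = i := by omega
      subst hji'
      simp only [hτ1, if_pos le_rfl, if_neg (by omega : ¬ i + 1 ≤ i)]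
      exact hτi
  have p1_mesh : ∀ j < i+1, τ1 (j+1) - τ1 j < δ1 := by
    intro j hj
    rcases Nat.lt_or_ge j i with hji | hji
    · simp only [hτ1, if_pos hji.le, if_pos (Nat.succ_le_of_lt hji)]
      exact lt_of_lt_of_le (hmesh j (by omega)) (min_le_left _ _)
    · have hji' : j = i := by omega
      subst hji'
      simp only [hτ1, if_pos le_rfl, if_neg (by omega : ¬ i + 1 ≤ i)]
      have := lt_of_lt_of_le (hmesh i (by omega)) (min_le_left _ _)
      linarith [hτi1]
  -- partition facts for τ2 on [u,t]
  have p2_0 : τ2 0 = u := by simp [hτ2]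
  have p2_n : τ2 (n-i) = t := by
    have hne : n - i ≠ 0 := by omega
    simp only [hτ2, if_neg hne]
    rw [show i + (n - i) = n by omega, hn']
  have p2_mono : ∀ j < n-i, τ2 j ≤ τ2 (j+1) := by
    intro j hj
    rcases Nat.eq_zero_or_pos j with hj0 | hj0
    · subst hj0
      simp only [hτ2, if_pos rfl, if_neg (by omega : ¬ (0:ℕ)+1 = 0)]
      exact hτi1
    · simp only [hτ2, if_neg (by omega : ¬ j = 0), if_neg (by omega : ¬ j+1 = 0)]
      rw [show i + (j+1) = (i+j) + 1 by omega]
      exact hmono (i+j) (by omega)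
  have p2_mesh : ∀ j < n-i, τ2 (j+1) - τ2 j < δ2 := by
    intro j hj
    rcases Nat.eq_zero_or_pos j with hj0 | hj0
    · subst hj0
      simp only [hτ2, if_pos rfl, if_neg (by omega : ¬ (0:ℕ)+1 = 0)]
      have := lt_of_lt_of_le (hmesh i hin) (le_trans (min_le_right _ _) (min_le_left _ _))
      simp only [show i + 1 = i + 1 from rfl]
      linarith [hτi]
    · simp only [hτ2, if_neg (by omega : ¬ j = 0), if_neg (by omega : ¬ j+1 = 0)]
      rw [show i + (j+1) = (i+j) + 1 by omega]
      exact lt_of_lt_of_le (hmesh (i+j) (by omega)) (le_trans (min_le_right _ _) (min_le_left _ _))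
  have E1 := H1 (i+1) τ1 (Nat.succ_pos i) p1_0 p1_n p1_mono p1_mesh
  have E2 := H2 (n-i) τ2 (by omega) p2_0 p2_n p2_mono p2_mesh
  -- sum splitting identity
  have key : RSSum f g n τ = RSSum f g (i+1) τ1 + RSSum f g (n-i) τ2
      + (g (τ (i+1)) - g u) * (f (τ i) - f u) := by
    have e0 : RSSum f g n τ = (∑ j ∈ Finset.range i, (g (τ (j+1)) - g (τ j)) * f (τ j))
        + (g (τ (i+1)) - g (τ i)) * f (τ i)
        + ∑ j ∈ Finset.range (n - (i+1)), (g (τ (i+1+j+1)) - g (τ (i+1+j))) * f (τ (i+1+j)) := by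
      conv_lhs => rw [RSSum, show n = (i+1) + (n - (i+1)) by omega, Finset.sum_range_add,
        Finset.sum_range_succ]
      simp only [smul_eq_mul]
    have e1 : RSSum f g (i+1) τ1 = (∑ j ∈ Finset.range i, (g (τ (j+1)) - g (τ j)) * f (τ j))
        + (g u - g (τ i)) * f (τ i) := by
      rw [RSSum, Finset.sum_range_succ]
      congr 1
      · refine Finset.sum_congr rfl fun j hj => ?_
        rw [Finset.mem_range] at hj
        simp only [hτ1, if_pos hj.le, if_pos (Nat.succ_le_of_lt hj), smul_eq_mul]
      · simp only [hτ1, if_pos le_rfl, if_neg (by omega : ¬ i + 1 ≤ i), smul_eq_mul]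
    have e2 : RSSum f g (n-i) τ2 = (g (τ (i+1)) - g u) * f u
        + ∑ j ∈ Finset.range (n - (i+1)), (g (τ (i+1+j+1)) - g (τ (i+1+j))) * f (τ (i+1+j)) := by
      conv_lhs => rw [RSSum, show n - i = 1 + (n - (i+1)) by omega, Finset.sum_range_add]
      congr 1
      · simp only [Finset.sum_range_one, hτ2, if_pos rfl, if_neg (by omega : ¬ (0:ℕ)+1 = 0),
          smul_eq_mul]
        norm_num
      · refine Finset.sum_congr rfl fun j _ => ?_
        simp only [hτ2, if_neg (by omega : ¬ 1 + j = 0), if_neg (by omega : ¬ 1 + j + 1 = 0),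
          smul_eq_mul]
        rw [show i + (1 + j) = i + 1 + j by omega, show i + (1 + j + 1) = i + 1 + j + 1 by omega]
    rw [e0, e1, e2]
    ring
  -- error estimate
  have hsτi : s ≤ τ i := h0 ▸ partition_mono hmono 0 i (Nat.zero_le _) hin.le
  have hτit : τ i ≤ t := hn' ▸ partition_mono hmono i n hin.le le_rfl
  have hsτi1 : s ≤ τ (i+1) := h0 ▸ partition_mono hmono 0 (i+1) (Nat.zero_le _) hin
  have hτi1t : τ (i+1) ≤ t := hn' ▸ partition_mono hmono (i+1) n hin le_rfl
  have hgb : |g (τ (i+1)) - g u| ≤ ε/(3*(2*M+1)) := by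
    refine H3 (τ (i+1)) hsτi1 hτi1t ?_
    rw [abs_of_nonneg (by linarith)]
    have := lt_of_lt_of_le (hmesh i hin) (le_trans (min_le_right _ _) (min_le_right _ _))
    linarith
  have hfb : |f (τ i) - f u| ≤ 2 * M := by
    calc |f (τ i) - f u| ≤ |f (τ i)| + |f u| := abs_sub _ _
      _ ≤ M + M := add_le_add (hM _ hsτi hτit) (hM _ (by linarith) (by linarith))
      _ = 2 * M := by ring
  have herr : |(g (τ (i+1)) - g u) * (f (τ i) - f u)| < ε/3 := by
    rw [abs_mul]
    calc |g (τ (i+1)) - g u| * |f (τ i) - f u| ≤ (ε/(3*(2*M+1))) * (2*M) := by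
          apply mul_le_mul hgb hfb (abs_nonneg _) (by positivity)
      _ < ε/3 := by
          rw [div_mul_eq_mul_div, div_lt_div_iff₀ (by positivity) (by norm_num)]
          nlinarith
  have final : RSSum f g n τ - (I1 + I2) = (RSSum f g (i+1) τ1 - I1)
      + (RSSum f g (n-i) τ2 - I2) + (g (τ (i+1)) - g u) * (f (τ i) - f u) := by
    rw [key]; ring
  rw [Real.norm_eq_abs, final]
  calc |(RSSum f g (i+1) τ1 - I1) + (RSSum f g (n-i) τ2 - I2)
        + (g (τ (i+1)) - g u) * (f (τ i) - f u)|
      ≤ |(RSSum f g (i+1) τ1 - I1) + (RSSum f g (n-i) τ2 - I2)|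
        + |(g (τ (i+1)) - g u) * (f (τ i) - f u)| := abs_add_le _ _
    _ ≤ |RSSum f g (i+1) τ1 - I1| + |RSSum f g (n-i) τ2 - I2|
        + |(g (τ (i+1)) - g u) * (f (τ i) - f u)| := by linarith [abs_add_le (RSSum f g (i+1) τ1 - I1) (RSSum f g (n-i) τ2 - I2)]
    _ < ε/3 + ε/3 + ε/3 := by
        rw [Real.norm_eq_abs] at E1 E2
        exact add_lt_add (add_lt_add E1 E2) herr
    _ = ε := by ring
lemma simplex_nil_inv {d : ℕ} {x : Fin d → ℝ → ℝ} {s : ℝ} {h0 J : ℝ → ℝ}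
    (h : IsSimplexIntegral d x s h0 [] J) : J = h0 := by
  generalize hw : ([] : List (Fin d)) = w' at h
  cases h with
  | nil => rfl
  | step w2 J2 a2 J' h2 hrs => exact absurd hw (by simp)

lemma simplex_concat_inv {d : ℕ} {x : Fin d → ℝ → ℝ} {s : ℝ} {h0 J : ℝ → ℝ}
    {w : List (Fin d)} {a : Fin d} (h : IsSimplexIntegral d x s h0 (w ++ [a]) J) :
    ∃ J0, IsSimplexIntegral d x s h0 w J0 ∧ ∀ t, s ≤ t → IsRS J0 (x a) s t (J t) := by
  generalize hw : w ++ [a] = w' at h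
  cases h with
  | nil => exact absurd hw (by simp)
  | step w2 J2 a2 J' h2 hrs =>
    obtain ⟨hw2, ha2⟩ := List.append_inj' hw rfl
    obtain rfl : a = a2 := by simpa using ha2
    subst hw2
    exact ⟨J2, h2, hrs⟩

lemma simplex_unique {d : ℕ} {x : Fin d → ℝ → ℝ} {s : ℝ} {h0 : ℝ → ℝ} :
    ∀ {w : List (Fin d)} {J : ℝ → ℝ}, IsSimplexIntegral d x s h0 w J →
    ∀ {J' : ℝ → ℝ}, IsSimplexIntegral d x s h0 w J' → ∀ t, s ≤ t → J t = J' t := by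
  intro w J h
  induction h with
  | nil =>
    intro J' h' t _
    rw [simplex_nil_inv h']
  | step w J a J2 hJ hrs ih =>
    intro J' h' t ht
    obtain ⟨J0, hJ0, hrs'⟩ := simplex_concat_inv h'
    refine isRS_unique ht (hrs t ht) (isRS_congr_on (f := J0) ?_ (hrs' t ht))
    intro r h1 _
    exact (ih hJ0 r h1).symm
lemma coord_dist_le {d : ℕ} (y z : PiLp 1 (fun _ : Fin d => ℝ)) (a : Fin d) :
    |y a - z a| ≤ dist y z := by
  have hdist : dist y z = ∑ b : Fin d, dist (y b) (z b) := by
    rw [PiLp.dist_eq_sum (by norm_num : 0 < (1:ENNReal).toReal)]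
    norm_num
  rw [hdist]
  calc |y a - z a| = dist (y a) (z a) := (Real.dist_eq _ _).symm
    _ ≤ ∑ b : Fin d, dist (y b) (z b) := by
        exact Finset.single_le_sum (f := fun b => dist (y b) (z b))
          (fun b _ => dist_nonneg) (Finset.mem_univ a)

lemma sum_coord_var {d : ℕ} {T : ℝ} {x : ℝ → PiLp 1 (fun _ : Fin d => ℝ)}
    (hxbv : BoundedVariationOn x (Set.Icc 0 T))
    {a : Fin d} {n : ℕ} {τ : ℕ → ℝ} (hmono : ∀ i < n, τ i ≤ τ (i+1))
    (hmem : ∀ i ≤ n, τ i ∈ Set.Icc (0:ℝ) T) :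
    ∑ i ∈ Finset.range n, |x (τ (i+1)) a - x (τ i) a|
      ≤ (eVariationOn x (Set.Icc 0 T)).toReal := by
  set u : ℕ → ℝ := fun j => τ (min j n) with hu
  have humono : Monotone u := by
    intro j k hjk
    exact partition_mono hmono _ _ (min_le_min_right n hjk) (min_le_right _ _)
  have hus : ∀ i, u i ∈ Set.Icc (0:ℝ) T := fun i => hmem _ (min_le_right _ _)
  have hsum := eVariationOn.sum_le (f := x) (s := Set.Icc 0 T) (n := n) humono hus
  have step1 : ∑ i ∈ Finset.range n, |x (τ (i+1)) a - x (τ i) a|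
      ≤ ∑ i ∈ Finset.range n, (edist (x (u (i+1))) (x (u i))).toReal := by
    refine Finset.sum_le_sum fun i hi => ?_
    rw [Finset.mem_range] at hi
    have hui : u i = τ i := by simp [hu, min_eq_left hi.le]
    have hui1 : u (i+1) = τ (i+1) := by simp [hu, min_eq_left (Nat.succ_le_of_lt hi)]
    rw [hui, hui1, edist_dist, ENNReal.toReal_ofReal dist_nonneg]
    exact coord_dist_le _ _ a
  have step2 : ∑ i ∈ Finset.range n, (edist (x (u (i+1))) (x (u i))).toReal
      = (∑ i ∈ Finset.range n, edist (x (u (i+1))) (x (u i))).toReal := by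
    rw [ENNReal.toReal_sum]
    intro i _
    exact edist_ne_top _ _
  rw [step2] at step1
  exact le_trans step1 (ENNReal.toReal_mono hxbv hsum)

lemma coord_cont {d : ℕ} {T : ℝ} {x : ℝ → PiLp 1 (fun _ : Fin d => ℝ)}
    (hxc : ContinuousOn x (Set.Icc 0 T)) {u : ℝ} (hu : u ∈ Set.Icc (0:ℝ) T) (a : Fin d) :
    ∀ ε > (0:ℝ), ∃ δ > (0:ℝ), ∀ r, 0 ≤ r → r ≤ T → |r - u| < δ → |x r a - x u a| ≤ ε := by
  intro ε hε
  have hc := hxc u hu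
  rw [Metric.continuousWithinAt_iff] at hc
  obtain ⟨δ, hδ, H⟩ := hc ε hε
  refine ⟨δ, hδ, fun r h1 h2 h3 => ?_⟩
  have := H (Set.mem_Icc.mpr ⟨h1, h2⟩) (by rw [Real.dist_eq]; exact h3)
  exact le_of_lt (lt_of_le_of_lt (coord_dist_le (x r) (x u) a) this)
section YLemmas

variable {d : ℕ} {T : ℝ} {x : ℝ → PiLp 1 (fun _ : Fin d => ℝ)}
  {Y : ℝ → List (Fin d) → ℝ → ℝ}
  (hY : ∀ s' ∈ Set.Icc (0 : ℝ) T, ∀ w : List (Fin d),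
    IsSimplexIntegral d (fun a u => x u a) s' (fun _ => 1) w (Y s' w))

include hY

lemma Y_nil {s' : ℝ} (hs' : s' ∈ Set.Icc (0:ℝ) T) (r : ℝ) : Y s' [] r = 1 := by
  have := simplex_nil_inv (hY s' hs' [])
  exact congrFun this r

lemma isRS_Y {s' : ℝ} (hs' : s' ∈ Set.Icc (0:ℝ) T) (w : List (Fin d)) (a : Fin d)
    (t : ℝ) (ht : s' ≤ t) :
    IsRS (Y s' w) (fun r => x r a) s' t (Y s' (w ++ [a]) t) := by
  obtain ⟨J0, hJ0, hrs⟩ := simplex_concat_inv (hY s' hs' (w ++ [a]))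
  exact isRS_congr_on (fun r h1 _ => simplex_unique hJ0 (hY s' hs' w) r h1) (hrs t ht)

lemma Y_bounded (hxbv : BoundedVariationOn x (Set.Icc 0 T))
    {s' : ℝ} (hs' : s' ∈ Set.Icc (0:ℝ) T) (w : List (Fin d)) :
    ∃ M > (0:ℝ), ∀ r, s' ≤ r → r ≤ T → |Y s' w r| ≤ M := by
  induction w using List.reverseRecOn with
  | nil =>
    refine ⟨1, one_pos, fun r _ _ => ?_⟩
    rw [Y_nil hY hs']
    norm_num
  | append_singleton w a ih =>
    obtain ⟨M, hM0, hM⟩ := ih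
    set V := (eVariationOn x (Set.Icc 0 T)).toReal with hV
    have hV0 : 0 ≤ V := ENNReal.toReal_nonneg
    refine ⟨M * V + 1, by positivity, fun r hsr hrT => ?_⟩
    have h := isRS_Y hY hs' w a r hsr
    have hb := isRS_abs_le hsr h (fun q h1 h2 => hM q h1 (le_trans h2 hrT)) hM0.le
      (fun n τ hn h0 hn' hmono => sum_coord_var hxbv hmono (fun i hi => ?_))
    · linarith
    · constructor
      · exact le_trans hs'.1 (h0 ▸ partition_mono hmono 0 i (Nat.zero_le _) hi)
      · exact le_trans (hn' ▸ partition_mono hmono i n hi le_rfl) hrT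

end YLemmas
/-- Chen's identity for the iterated integrals of a continuous path of
bounded variation, in tensor coordinates: for a word `i` of length k and s ≤ u ≤ t,
the coordinate of X^k_{s,t} at `i` is ∑_{j=0}^k X^j_{s,u}(first j letters) ·
X^{k-j}_{u,t}(last k-j letters).  `Y s' w` denotes the iterated integral over the
simplex based at `s'` for the word `w` (with X^0 = 1). -/
theorem stmt13 (d : ℕ) (hd : 1 ≤ d) (T : ℝ) (hT : 0 ≤ T)
    (x : ℝ → PiLp 1 (fun _ : Fin d => ℝ))
    (hxc : ContinuousOn x (Set.Icc 0 T))
    (hxbv : BoundedVariationOn x (Set.Icc 0 T))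
    (Y : ℝ → List (Fin d) → ℝ → ℝ)
    (hY : ∀ s' ∈ Set.Icc (0 : ℝ) T, ∀ w : List (Fin d),
      IsSimplexIntegral d (fun a u => x u a) s' (fun _ => 1) w (Y s' w)) :
    ∀ (k : ℕ), 1 ≤ k → ∀ (i : Fin k → Fin d) (s u t : ℝ),
      0 ≤ s → s ≤ u → u ≤ t → t ≤ T →
      Y s (List.ofFn i) t =
        ∑ j ∈ Finset.range (k + 1),
          Y s ((List.ofFn i).take j) u * Y u ((List.ofFn i).drop j) t := by

  have chen : ∀ w : List (Fin d), ∀ s u t : ℝ, 0 ≤ s → s ≤ u → u ≤ t → t ≤ T →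
      Y s w t = ∑ j ∈ Finset.range (w.length + 1),
        Y s (w.take j) u * Y u (w.drop j) t := by
    intro w
    induction w using List.reverseRecOn with
    | nil =>
      intro s u t h0s hsu hut htT
      have hsI : s ∈ Set.Icc (0:ℝ) T := ⟨h0s, by linarith⟩
      have huI : u ∈ Set.Icc (0:ℝ) T := ⟨by linarith, by linarith⟩
      simp [Y_nil hY hsI, Y_nil hY huI]
    | append_singleton w a ih =>
      intro s u t h0s hsu hut htT
      have hsI : s ∈ Set.Icc (0:ℝ) T := ⟨h0s, by linarith⟩
      have huI : u ∈ Set.Icc (0:ℝ) T := ⟨by linarith, by linarith⟩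
      set k := w.length with hk
      set I2 := ∑ j ∈ Finset.range (k+1), Y s (w.take j) u * Y u (w.drop j ++ [a]) t with hI2
      -- the RS-integral over [u,t]
      have h2' : IsRS (Y s w) (fun r => x r a) u t I2 := by
        have hsum := isRS_sum (Finset.range (k+1)) (fun j => Y s (w.take j) u)
          (fun j => Y u (w.drop j)) (fun r => x r a) u t
          (fun j => Y u (w.drop j ++ [a]) t)
          (fun j _ => isRS_Y hY huI (w.drop j) a t hut)
        exact isRS_congr_on
          (fun r h1 h2 => (ih s u r h0s hsu h1 (le_trans h2 htT)).symm) hsum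
      -- the RS-integral over [s,u]
      have h1' : IsRS (Y s w) (fun r => x r a) s u (Y s (w ++ [a]) u) :=
        isRS_Y hY hsI w a u hsu
      -- boundedness
      obtain ⟨M, hM0, hMb⟩ := Y_bounded hY hxbv hsI w
      -- gluing
      have hglue : IsRS (Y s w) (fun r => x r a) s t (Y s (w ++ [a]) u + I2) := by
        refine isRS_glue hsu hut hM0 (fun r h1 h2 => hMb r h1 (le_trans h2 htT)) ?_ h1' h2'
        intro ε hε
        obtain ⟨δ, hδ, H⟩ := coord_cont hxc huI a ε hε
        exact ⟨δ, hδ, fun r hr1 hr2 hr3 => H r (by linarith) (by linarith) hr3⟩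
      have hdirect : IsRS (Y s w) (fun r => x r a) s t (Y s (w ++ [a]) t) :=
        isRS_Y hY hsI w a t (le_trans hsu hut)
      have hkey : Y s (w ++ [a]) t = Y s (w ++ [a]) u + I2 :=
        isRS_unique (le_trans hsu hut) hdirect hglue
      -- compute the right-hand side
      have hlen : (w ++ [a]).length = k + 1 := by simp [hk]
      rw [hlen, Finset.sum_range_succ]
      have hlast : Y s ((w ++ [a]).take (k+1)) u * Y u ((w ++ [a]).drop (k+1)) t
          = Y s (w ++ [a]) u := by
        rw [show (w ++ [a]).take (k+1) = w ++ [a] by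
            rw [List.take_of_length_le (by simp [hk])],
          show (w ++ [a]).drop (k+1) = [] by
            rw [List.drop_of_length_le (by simp [hk])]]
        rw [Y_nil hY huI]
        ring
      rw [hlast, hkey]
      have hsum_eq : ∑ j ∈ Finset.range (k+1),
          Y s ((w ++ [a]).take j) u * Y u ((w ++ [a]).drop j) t = I2 := by
        rw [hI2]
        refine Finset.sum_congr rfl fun j hj => ?_
        rw [Finset.mem_range] at hj
        rw [List.take_append_of_le_length (by omega : j ≤ w.length),
          List.drop_append_of_le_length (by omega : j ≤ w.length)]
      rw [hsum_eq]
      ring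
  intro k hk i s u t h0s hsu hut htT
  have := chen (List.ofFn i) s u t h0s hsu hut htT
  rwa [List.length_ofFn] at this
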